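/- Let d ≥ 1, 0 < α < 2, x ∈ ℝ^d, r₀ > 0, and let ψ : ℝ^d → ℝ be four times continuously differentiable on the closed ball B̄_{r₀}(x), with |D⁴ψ(z)(η, η, η, η)| ≤ M₄ for all z ∈ B̄_{r₀}(x) and all unit vectors η. Then for every unit vector ξ, | ∫_0^{r₀} (2ψ(x) − ψ(x + rξ) − ψ(x − rξ)) r^{−1−α} dr + (r₀^{2−α}/(2 − α)) ξᵀ Hess ψ(x) ξ | ≤ (M₄/12) · r₀^{4−α}/(4 − α). -/

import Mathlib

open MeasureTheory Metric Set Real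

variable {E : Type*} [NormedAddCommGroup E] [NormedSpace ℝ E]

theorem aux_hasDeriv {ψ : E → ℝ} {s : Set E} (hs : UniqueDiffOn ℝ s)
    (hψ : ContDiffOn ℝ 4 ψ s) {x η : E} {a b : ℝ}
    (hmap : ∀ t ∈ Icc a b, x + t • η ∈ s)
    {n : ℕ} (hn : n < 4) {t : ℝ} (ht : t ∈ Icc a b) :
    HasDerivWithinAt (fun u => iteratedFDerivWithin ℝ n ψ s (x + u • η) (fun _ => η))
      (iteratedFDerivWithin ℝ (n + 1) ψ s (x + t • η) (fun _ => η)) (Icc a b) t := by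
  have hdiff : DifferentiableOn ℝ (iteratedFDerivWithin ℝ n ψ s) s :=
    hψ.differentiableOn_iteratedFDerivWithin (by exact_mod_cast hn) hs
  have hz : x + t • η ∈ s := hmap t ht
  have hG := (hdiff _ hz).hasFDerivWithinAt
  have hline : HasDerivWithinAt (fun u : ℝ => x + u • η) η (Icc a b) t := by
    simpa using (((hasDerivAt_id t).smul_const η).const_add x).hasDerivWithinAt
  have hcomp := hG.comp_hasDerivWithinAt t hline (fun u hu => hmap u hu)
  have := (ContinuousMultilinearMap.apply ℝ (fun _ : Fin n => E) ℝ
      (fun _ => η)).hasFDerivAt.comp_hasDerivWithinAt t hcomp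
  exact this

theorem aux_iteratedDeriv {ψ : E → ℝ} {s : Set E} (hs : UniqueDiffOn ℝ s)
    (hψ : ContDiffOn ℝ 4 ψ s) {x η : E} {a b : ℝ} (hab : a < b)
    (hmap : ∀ t ∈ Icc a b, x + t • η ∈ s)
    {n : ℕ} (hn : n ≤ 4) {t : ℝ} (ht : t ∈ Icc a b) :
    iteratedDerivWithin n (fun u => ψ (x + u • η)) (Icc a b) t
      = iteratedFDerivWithin ℝ n ψ s (x + t • η) (fun _ => η) := by
  induction n generalizing t with
  | zero => simp [iteratedFDerivWithin_zero_apply]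
  | succ n IH =>
    rw [iteratedDerivWithin_succ,
      derivWithin_congr (fun y hy => IH (le_trans (Nat.le_succ n) hn) hy) (IH (le_trans (Nat.le_succ n) hn) ht)]
    exact (aux_hasDeriv hs hψ hmap (by omega) ht).derivWithin (uniqueDiffOn_Icc hab t ht)

theorem aux_taylor {ψ : E → ℝ} {s : Set E} (hs : UniqueDiffOn ℝ s)
    (hψ : ContDiffOn ℝ 4 ψ s) {x η : E} {r : ℝ} (hr : 0 < r)
    (hmap : ∀ t ∈ Icc (0:ℝ) r, x + t • η ∈ s) :
    ∃ c ∈ Ioo (0:ℝ) r, ψ (x + r • η) - (ψ x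
      + r * iteratedFDerivWithin ℝ 1 ψ s x (fun _ => η)
      + r ^ 2 / 2 * iteratedFDerivWithin ℝ 2 ψ s x (fun _ => η)
      + r ^ 3 / 6 * iteratedFDerivWithin ℝ 3 ψ s x (fun _ => η))
      = iteratedFDerivWithin ℝ 4 ψ s (x + c • η) (fun _ => η) * r ^ 4 / 24 := by
  set φ : ℝ → ℝ := fun u => ψ (x + u • η) with hφdef
  have haff : ContDiff ℝ 4 (fun u : ℝ => x + u • η) := by fun_prop
  have hφ : ContDiffOn ℝ 3 φ (Icc 0 r) :=
    (hψ.of_le (by norm_num)).comp ((haff.of_le (by norm_num)).contDiffOn)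
      (fun t ht => hmap t ht)
  have hder : ∀ {k : ℕ}, k ≤ 4 → ∀ {t : ℝ}, t ∈ Icc (0:ℝ) r →
      iteratedDerivWithin k φ (Icc 0 r) t
        = iteratedFDerivWithin ℝ k ψ s (x + t • η) (fun _ => η) :=
    fun hk _ ht => aux_iteratedDeriv hs hψ hr hmap hk ht
  have hf' : DifferentiableOn ℝ (iteratedDerivWithin 3 φ (Icc 0 r)) (Ioo 0 r) := by
    intro t ht
    have ht' := Ioo_subset_Icc_self ht
    exact (((aux_hasDeriv hs hψ hmap (by norm_num) ht').differentiableWithinAt).congr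
      (fun y hy => hder (by norm_num) hy) (hder (by norm_num) ht')).mono Ioo_subset_Icc_self
  have hT0 := taylor_mean_remainder_lagrange (x₀ := 0) (x := r) (n := 3) hr.ne
    (by rw [uIcc_of_le hr.le]; exact hφ) (by rw [uIcc_of_le hr.le, uIoo_of_le hr.le]; exact hf')
  rw [uIcc_of_le hr.le, uIoo_of_le hr.le] at hT0
  obtain ⟨c, hc, hT⟩ := hT0
  refine ⟨c, hc, ?_⟩
  have h0 : (0:ℝ) ∈ Icc (0:ℝ) r := ⟨le_rfl, hr.le⟩
  rw [taylor_within_apply] at hT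
  simp only [Finset.sum_range_succ, Finset.sum_range_zero, smul_eq_mul] at hT
  rw [hder (by norm_num) h0, hder (by norm_num) h0, hder (by norm_num) h0,
    hder (by norm_num) h0, hder (by norm_num) (Ioo_subset_Icc_self hc)] at hT
  simp only [zero_smul, add_zero, iteratedFDerivWithin_zero_apply, sub_zero] at hT
  norm_num [Nat.factorial] at hT
  linarith [hT]

theorem stmt_5 (d : ℕ) (hd : 1 ≤ d) (α : ℝ) (hα₀ : 0 < α) (hα₂ : α < 2)
    (x : EuclideanSpace ℝ (Fin d)) (r₀ : ℝ) (hr₀ : 0 < r₀)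
    (ψ : EuclideanSpace ℝ (Fin d) → ℝ)
    (hψ : ContDiffOn ℝ 4 ψ (closedBall x r₀))
    (M₄ : ℝ)
    (hbound : ∀ z ∈ closedBall x r₀, ∀ η : EuclideanSpace ℝ (Fin d), ‖η‖ = 1 →
      |iteratedFDerivWithin ℝ 4 ψ (closedBall x r₀) z (fun _ => η)| ≤ M₄)
    (ξ : EuclideanSpace ℝ (Fin d)) (hξ : ‖ξ‖ = 1) :
    |(∫ r in Set.Ioc (0 : ℝ) r₀,
        (2 * ψ x - ψ (x + r • ξ) - ψ (x - r • ξ)) * r ^ (-1 - α))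
        + r₀ ^ (2 - α) / (2 - α)
          * iteratedFDerivWithin ℝ 2 ψ (closedBall x r₀) x (fun _ => ξ)|
      ≤ M₄ / 12 * (r₀ ^ (4 - α) / (4 - α)) := by
  have hM : 0 ≤ M₄ := le_trans (abs_nonneg _) (hbound x (mem_closedBall_self hr₀.le) ξ hξ)
  set s := closedBall x r₀ with hsdef
  set F2 := iteratedFDerivWithin ℝ 2 ψ s x (fun _ => ξ) with hF2def
  have hsu : UniqueDiffOn ℝ s := uniqueDiffOn_convex (convex_closedBall x r₀)
    (by rw [hsdef, interior_closedBall x hr₀.ne']; exact nonempty_ball.2 hr₀)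
  have hmap : ∀ (η : EuclideanSpace ℝ (Fin d)), ‖η‖ = 1 → ∀ r ≤ r₀,
      ∀ t ∈ Icc (0:ℝ) r, x + t • η ∈ s := by
    intro η hη r hr t ht
    rw [hsdef, mem_closedBall, dist_eq_norm, add_sub_cancel_left, norm_smul, hη,
      Real.norm_eq_abs, abs_of_nonneg ht.1, mul_one]
    exact ht.2.trans hr
  have hξ' : ‖-ξ‖ = 1 := by simpa using hξ
  -- pointwise Taylor bound
  have key : ∀ r ∈ Ioc (0:ℝ) r₀,
      |2 * ψ x - ψ (x + r • ξ) - ψ (x - r • ξ) + r ^ 2 * F2| ≤ M₄ / 12 * r ^ 4 := by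
    intro r hr
    obtain ⟨c₁, hc₁, h₁⟩ := aux_taylor hsu hψ hr.1 (hmap ξ hξ r hr.2)
    obtain ⟨c₂, hc₂, h₂⟩ := aux_taylor hsu hψ hr.1 (hmap (-ξ) hξ' r hr.2)
    have hneg : ∀ k : ℕ, ∀ z, (iteratedFDerivWithin ℝ k ψ s z (fun _ : Fin k => -ξ))
        = (-1 : ℝ) ^ k * iteratedFDerivWithin ℝ k ψ s z (fun _ => ξ) := by
      intro k z
      have h := (iteratedFDerivWithin ℝ k ψ s z).map_smul_univ
        (fun _ : Fin k => (-1:ℝ)) (fun _ => ξ)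
      simpa using h
    rw [hneg 1 x, hneg 2 x, hneg 3 x] at h₂
    simp only [smul_neg, ← sub_eq_add_neg] at h₂
    norm_num at h₂
    set A := iteratedFDerivWithin ℝ 4 ψ s (x + c₁ • ξ) (fun _ => ξ) with hA
    set B := iteratedFDerivWithin ℝ 4 ψ s (x - c₂ • ξ) (fun _ => -ξ) with hB
    have hAb : |A| ≤ M₄ :=
      hbound _ (hmap ξ hξ r hr.2 c₁ (Ioo_subset_Icc_self hc₁)) ξ hξ
    have hBb : |B| ≤ M₄ := by
      have hz := hmap (-ξ) hξ' r hr.2 c₂ (Ioo_subset_Icc_self hc₂)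
      rw [smul_neg, ← sub_eq_add_neg] at hz
      exact hbound _ hz (-ξ) hξ'
    have heq : 2 * ψ x - ψ (x + r • ξ) - ψ (x - r • ξ) + r ^ 2 * F2
        = -(A * r ^ 4 / 24 + B * r ^ 4 / 24) := by linarith
    rw [heq, abs_neg]
    have h4 : (0:ℝ) ≤ r ^ 4 := by positivity
    calc |A * r ^ 4 / 24 + B * r ^ 4 / 24| ≤ |A * r ^ 4 / 24| + |B * r ^ 4 / 24| := abs_add_le _ _
      _ = |A| * r ^ 4 / 24 + |B| * r ^ 4 / 24 := by
          rw [abs_div, abs_div, abs_mul, abs_mul, abs_pow, abs_of_pos hr.1]; norm_num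
      _ ≤ M₄ / 12 * r ^ 4 := by nlinarith
  -- integral estimates
  set g : ℝ → ℝ := fun r => 2 * ψ x - ψ (x + r • ξ) - ψ (x - r • ξ) with hgdef
  set h : ℝ → ℝ := fun r => (g r + r ^ 2 * F2) * r ^ (-1 - α) with hhdef
  have hmem₁ : ∀ t ∈ Ioc (0:ℝ) r₀, x + t • ξ ∈ s :=
    fun t ht => hmap ξ hξ r₀ le_rfl t ⟨ht.1.le, ht.2⟩
  have hmem₂ : ∀ t ∈ Ioc (0:ℝ) r₀, x - t • ξ ∈ s := by
    intro t ht
    have := hmap (-ξ) hξ' r₀ le_rfl t ⟨ht.1.le, ht.2⟩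
    rwa [smul_neg, ← sub_eq_add_neg] at this
  have hcont : ContinuousOn h (Ioc 0 r₀) := by
    apply ContinuousOn.mul
    · apply ContinuousOn.add
      · have hψc : ContinuousOn ψ s := hψ.continuousOn
        have c1 : ContinuousOn (fun r : ℝ => ψ (x + r • ξ)) (Ioc 0 r₀) :=
          hψc.comp (by fun_prop) hmem₁
        have c2 : ContinuousOn (fun r : ℝ => ψ (x - r • ξ)) (Ioc 0 r₀) :=
          hψc.comp (by fun_prop) hmem₂
        exact (continuousOn_const.sub c1).sub c2
      · fun_prop
    · intro r hr
      exact (Real.continuousAt_rpow_const r _ (Or.inl hr.1.ne')).continuousWithinAt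
  have hmeas : AEStronglyMeasurable h (volume.restrict (Ioc 0 r₀)) :=
    hcont.aestronglyMeasurable measurableSet_Ioc
  have hbnd : ∀ᵐ r ∂volume.restrict (Ioc 0 r₀), ‖h r‖ ≤ M₄ / 12 * r ^ (3 - α) := by
    refine (ae_restrict_iff' measurableSet_Ioc).2 (ae_of_all _ fun r hr => ?_)
    have hpow : (r:ℝ) ^ (4:ℕ) * r ^ (-1 - α) = r ^ (3 - α) := by
      rw [← Real.rpow_natCast r 4, ← Real.rpow_add hr.1]; congr 1; push_cast; ring
    have hrpos : (0:ℝ) < r ^ (-1 - α) := Real.rpow_pos_of_pos hr.1 _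
    rw [hhdef]
    simp only [Real.norm_eq_abs]
    rw [abs_mul, abs_of_pos hrpos]
    calc |g r + r ^ 2 * F2| * r ^ (-1 - α) ≤ (M₄ / 12 * r ^ 4) * r ^ (-1 - α) := by
          exact mul_le_mul_of_nonneg_right (key r hr) hrpos.le
      _ = M₄ / 12 * r ^ (3 - α) := by rw [mul_assoc, hpow]
  have hbint : IntegrableOn (fun r : ℝ => M₄ / 12 * r ^ (3 - α)) (Ioc 0 r₀) :=
    ((intervalIntegral.intervalIntegrable_rpow' (by linarith)).const_mul (M₄ / 12)).1
  have hint : IntegrableOn h (Ioc 0 r₀) := Integrable.mono' hbint hmeas hbnd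
  have hint2 : IntegrableOn (fun r : ℝ => F2 * r ^ (1 - α)) (Ioc 0 r₀) :=
    ((intervalIntegral.intervalIntegrable_rpow' (by linarith)).const_mul F2).1
  have hI1 : ∫ r in Ioc (0:ℝ) r₀, r ^ (1 - α) = r₀ ^ (2 - α) / (2 - α) := by
    rw [← intervalIntegral.integral_of_le hr₀.le,
      integral_rpow (Or.inl (by linarith))]
    have e : (1 - α + 1) = 2 - α := by ring
    rw [e, Real.zero_rpow (by intro hc; linarith [hc] : (2:ℝ) - α ≠ 0)]
    ring
  have hI3 : ∫ r in Ioc (0:ℝ) r₀, r ^ (3 - α) = r₀ ^ (4 - α) / (4 - α) := by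
    rw [← intervalIntegral.integral_of_le hr₀.le,
      integral_rpow (Or.inl (by linarith))]
    have e : (3 - α + 1) = 4 - α := by ring
    rw [e, Real.zero_rpow (by intro hc; linarith [hc] : (4:ℝ) - α ≠ 0)]
    ring
  have split : EqOn (fun r : ℝ => g r * r ^ (-1 - α))
      (fun r : ℝ => h r - F2 * r ^ (1 - α)) (Ioc 0 r₀) := by
    intro r hr
    have hpow : (r:ℝ) ^ (2:ℕ) * r ^ (-1 - α) = r ^ (1 - α) := by
      rw [← Real.rpow_natCast r 2, ← Real.rpow_add hr.1]; congr 1; push_cast; ring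
    simp only [hhdef]
    rw [add_mul, mul_comm (r ^ 2) F2, mul_assoc, hpow]
    ring
  have hIeq : ∫ r in Ioc (0:ℝ) r₀, g r * r ^ (-1 - α)
      = (∫ r in Ioc (0:ℝ) r₀, h r) - F2 * (r₀ ^ (2 - α) / (2 - α)) := by
    rw [setIntegral_congr_fun measurableSet_Ioc split, integral_sub hint hint2,
      integral_const_mul, hI1]
  have hgoal : (∫ r in Ioc (0:ℝ) r₀, g r * r ^ (-1 - α))
      + r₀ ^ (2 - α) / (2 - α) * F2 = ∫ r in Ioc (0:ℝ) r₀, h r := by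
    rw [hIeq]; ring
  rw [hgoal, ← Real.norm_eq_abs]
  calc ‖∫ r in Ioc (0:ℝ) r₀, h r‖ ≤ ∫ r in Ioc (0:ℝ) r₀, M₄ / 12 * r ^ (3 - α) :=
        norm_integral_le_of_norm_le hbint hbnd
    _ = M₄ / 12 * (r₀ ^ (4 - α) / (4 - α)) := by rw [integral_const_mul, hI3]
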